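/- arXiv:0707.2025 — 3 statements merged into one kernel-verified Lean document; each statement's English description precedes it below -/
import Mathlib

section
/- For d ≥ 1 and any constant c ≥ 0, the partial sums ∑_{m=0}^{N} C(d+m-1, d-1) · (c + π(m + d/2))^{-d} grow like log N; more precisely there exist constants 0 < c₁ ≤ c₂ such that for all N ≥ 2, c₁ log N ≤ ∑_{m=0}^{N} C(d+m-1,d-1)(c+π(m+d/2))^{-d} ≤ c₂ log N. -/
open Finset

lemma harmonic_cast_sum (n : ℕ) :
    ∑ m ∈ Finset.range n, ((m : ℝ) + 1)⁻¹ = (harmonic n : ℝ) := by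
  rw [harmonic]
  push_cast
  rfl

set_option maxHeartbeats 1000000 in
/-- The partial sums `∑_{m=0}^{N} C(d+m-1, d-1) (c + π(m + d/2))^{-d}` grow like `log N`. -/
theorem partial_sums_log_growth (d : ℕ) (hd : 1 ≤ d) (c : ℝ) (hc : 0 ≤ c) :
    ∃ c₁ c₂ : ℝ, 0 < c₁ ∧ c₁ ≤ c₂ ∧ ∀ N : ℕ, 2 ≤ N →
      c₁ * Real.log N ≤
        (∑ m ∈ Finset.range (N + 1),
          ((d + m - 1).choose (d - 1) : ℝ) * ((c + Real.pi * (m + (d : ℝ) / 2)) ^ d)⁻¹) ∧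
      (∑ m ∈ Finset.range (N + 1),
          ((d + m - 1).choose (d - 1) : ℝ) * ((c + Real.pi * (m + (d : ℝ) / 2)) ^ d)⁻¹) ≤
        c₂ * Real.log N := by
  obtain ⟨k, rfl⟩ : ∃ k, d = k + 1 := ⟨d - 1, (Nat.succ_pred_eq_of_pos hd).symm⟩
  have hpi := Real.pi_pos
  set A : ℝ := c + Real.pi * (k + 1) with hA
  have hApos : 0 < A := by positivity
  set K : ℝ := ((Nat.factorial k : ℝ) * A ^ (k + 1))⁻¹ with hK
  have hKpos : 0 < K := by positivity
  set K' : ℝ := ((k : ℝ) + 1) ^ k * (2 / Real.pi) ^ (k + 1) with hK'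
  have hK'pos : 0 < K' := by positivity
  have hlog2 : (0 : ℝ) < Real.log 2 := Real.log_pos (by norm_num)
  set C₂ : ℝ := K' * (1 / Real.log 2 + 2) with hC₂
  have hC₂pos : 0 < C₂ := by positivity
  refine ⟨min K C₂, max K C₂, lt_min hKpos hC₂pos,
    le_trans (min_le_left _ _) (le_max_left _ _), fun N hN => ?_⟩
  simp only [Nat.cast_add, Nat.cast_one]
  -- positivity of each denominator
  have hP : ∀ m : ℕ, (0 : ℝ) < c + Real.pi * ((m : ℝ) + ((k : ℝ) + 1) / 2) := by
    intro m; positivity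
  -- termwise lower bound
  have hterm_lo : ∀ m : ℕ, K * ((m : ℝ) + 1)⁻¹ ≤
      (((k + 1) + m - 1).choose ((k + 1) - 1) : ℝ) *
        ((c + Real.pi * ((m : ℝ) + ((k : ℝ) + 1) / 2)) ^ (k + 1))⁻¹ := by
    intro m
    have hch : ((k + 1) + m - 1).choose ((k + 1) - 1) = (k + m).choose k := by
      congr 1 <;> omega
    rw [hch]
    set x : ℝ := (m : ℝ) + 1 with hx
    have hxpos : (0 : ℝ) < x := by positivity
    set P : ℝ := c + Real.pi * ((m : ℝ) + ((k : ℝ) + 1) / 2) with hPdef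
    have hPpos : 0 < P := hP m
    have h1 : x ^ k / (Nat.factorial k : ℝ) ≤ ((k + m).choose k : ℝ) := by
      have := Nat.pow_le_choose (α := ℝ) k (k + m)
      have he : (k + m + 1 - k) = m + 1 := by omega
      rw [he] at this
      rw [hx]
      exact_mod_cast this
    have h3 : P ≤ A * x := by
      rw [hPdef, hA, hx]
      have hmk : (m : ℝ) + ((k : ℝ) + 1) / 2 ≤ ((k : ℝ) + 1) * ((m : ℝ) + 1) := by
        nlinarith [Nat.cast_nonneg (α := ℝ) m, Nat.cast_nonneg (α := ℝ) k]
      nlinarith [Nat.cast_nonneg (α := ℝ) m, hpi.le]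
    have h4 : P ^ (k + 1) ≤ (A * x) ^ (k + 1) :=
      pow_le_pow_left₀ hPpos.le h3 _
    have h5 : ((A * x) ^ (k + 1))⁻¹ ≤ (P ^ (k + 1))⁻¹ := by
      apply inv_anti₀ (by positivity) h4
    calc K * x⁻¹ = x ^ k / (Nat.factorial k : ℝ) * ((A * x) ^ (k + 1))⁻¹ := by
          rw [hK, mul_pow, pow_succ x k]
          have hfk : (0 : ℝ) < (Nat.factorial k : ℝ) := by positivity
          field_simp
      _ ≤ ((k + m).choose k : ℝ) * ((A * x) ^ (k + 1))⁻¹ := by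
          apply mul_le_mul_of_nonneg_right h1 (by positivity)
      _ ≤ ((k + m).choose k : ℝ) * (P ^ (k + 1))⁻¹ := by
          apply mul_le_mul_of_nonneg_left h5 (by positivity)
  -- termwise upper bound
  have hterm_hi : ∀ m : ℕ,
      (((k + 1) + m - 1).choose ((k + 1) - 1) : ℝ) *
        ((c + Real.pi * ((m : ℝ) + ((k : ℝ) + 1) / 2)) ^ (k + 1))⁻¹ ≤
      K' * ((m : ℝ) + 1)⁻¹ := by
    intro m
    have hch : ((k + 1) + m - 1).choose ((k + 1) - 1) = (k + m).choose k := by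
      congr 1 <;> omega
    rw [hch]
    set x : ℝ := (m : ℝ) + 1 with hx
    have hxpos : (0 : ℝ) < x := by positivity
    set P : ℝ := c + Real.pi * ((m : ℝ) + ((k : ℝ) + 1) / 2) with hPdef
    have hPpos : 0 < P := hP m
    have h1 : ((k + m).choose k : ℝ) ≤ (((k : ℝ) + 1) * x) ^ k := by
      calc ((k + m).choose k : ℝ) ≤ ((k + m : ℕ) : ℝ) ^ k := by
            exact_mod_cast Nat.choose_le_pow (k + m) k
        _ ≤ (((k : ℝ) + 1) * x) ^ k := by
            apply pow_le_pow_left₀ (by positivity)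
            rw [hx]; push_cast
            nlinarith [Nat.cast_nonneg (α := ℝ) m, Nat.cast_nonneg (α := ℝ) k]
    have h3 : Real.pi / 2 * x ≤ P := by
      rw [hPdef, hx]
      nlinarith [Nat.cast_nonneg (α := ℝ) m, Nat.cast_nonneg (α := ℝ) k, hc, hpi]
    have h4 : (Real.pi / 2 * x) ^ (k + 1) ≤ P ^ (k + 1) :=
      pow_le_pow_left₀ (by positivity) h3 _
    have h5 : (P ^ (k + 1))⁻¹ ≤ ((Real.pi / 2 * x) ^ (k + 1))⁻¹ :=
      inv_anti₀ (by positivity) h4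
    calc (((k + m).choose k : ℝ)) * (P ^ (k + 1))⁻¹
        ≤ (((k : ℝ) + 1) * x) ^ k * ((Real.pi / 2 * x) ^ (k + 1))⁻¹ := by
          apply mul_le_mul h1 h5 (by positivity) (by positivity)
      _ = K' * x⁻¹ := by
          rw [hK', mul_pow, mul_pow, pow_succ x k, div_pow, div_pow]
          have : (0 : ℝ) < Real.pi ^ (k + 1) := by positivity
          field_simp
  -- sum bounds
  have hsum_lo : K * (harmonic (N + 1) : ℝ) ≤
      ∑ m ∈ Finset.range (N + 1),
        (((k + 1) + m - 1).choose ((k + 1) - 1) : ℝ) *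
          ((c + Real.pi * ((m : ℝ) + ((k : ℝ) + 1) / 2)) ^ (k + 1))⁻¹ := by
    rw [← harmonic_cast_sum, Finset.mul_sum]
    exact Finset.sum_le_sum fun m _ => hterm_lo m
  have hsum_hi : (∑ m ∈ Finset.range (N + 1),
        (((k + 1) + m - 1).choose ((k + 1) - 1) : ℝ) *
          ((c + Real.pi * ((m : ℝ) + ((k : ℝ) + 1) / 2)) ^ (k + 1))⁻¹) ≤
      K' * (harmonic (N + 1) : ℝ) := by
    rw [← harmonic_cast_sum, Finset.mul_sum]
    exact Finset.sum_le_sum fun m _ => hterm_hi m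
  have hN1 : (1 : ℝ) ≤ (N : ℝ) := by exact_mod_cast hN.trans' (by norm_num)
  have hlogN : Real.log 2 ≤ Real.log N := by
    apply Real.log_le_log (by norm_num)
    exact_mod_cast hN
  have hlogNpos : 0 < Real.log N := lt_of_lt_of_le hlog2 hlogN
  have hhar_lo : Real.log N ≤ (harmonic (N + 1) : ℝ) := by
    calc Real.log N ≤ Real.log ((N : ℝ) + 1 + 1) := by
          apply Real.log_le_log (by linarith)
          linarith
      _ = Real.log ((N + 1 + 1 : ℕ) : ℝ) := by push_cast; ring_nf
      _ ≤ (harmonic (N + 1) : ℝ) := log_add_one_le_harmonic (N + 1)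
  have hhar_hi : (harmonic (N + 1) : ℝ) ≤ (1 / Real.log 2 + 2) * Real.log N := by
    have h1 : (harmonic (N + 1) : ℝ) ≤ 1 + Real.log ((N + 1 : ℕ) : ℝ) :=
      harmonic_le_one_add_log (N + 1)
    have h2 : Real.log ((N + 1 : ℕ) : ℝ) ≤ 2 * Real.log N := by
      have : ((N + 1 : ℕ) : ℝ) ≤ (N : ℝ) ^ 2 := by
        have hnat : N + 1 ≤ N ^ 2 := by nlinarith
        exact_mod_cast hnat
      calc Real.log ((N + 1 : ℕ) : ℝ) ≤ Real.log ((N : ℝ) ^ 2) := by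
            apply Real.log_le_log (by positivity) this
        _ = 2 * Real.log N := by
            rw [Real.log_pow]; norm_num
    have h3 : (1 : ℝ) ≤ 1 / Real.log 2 * Real.log N := by
      rw [one_div, ← div_eq_inv_mul, le_div_iff₀ hlog2]
      linarith
    linarith
  constructor
  · calc min K C₂ * Real.log N ≤ K * Real.log N :=
          mul_le_mul_of_nonneg_right (min_le_left _ _) hlogNpos.le
      _ ≤ K * (harmonic (N + 1) : ℝ) :=
        mul_le_mul_of_nonneg_left hhar_lo hKpos.le
      _ ≤ _ := hsum_lo
  · calc _ ≤ K' * (harmonic (N + 1) : ℝ) := hsum_hi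
      _ ≤ K' * ((1 / Real.log 2 + 2) * Real.log N) :=
        mul_le_mul_of_nonneg_left hhar_hi hK'pos.le
      _ = C₂ * Real.log N := by rw [hC₂]; ring
      _ ≤ max K C₂ * Real.log N :=
          mul_le_mul_of_nonneg_right (le_max_right _ _) hlogNpos.le
end

section
/- Let A be a diagonal operator on a separable Hilbert space with eigenvalues λ_m = (c + π(m + d/2))^{-1}, each occurring with multiplicity C(d+m-1, d-1), for m = 0,1,2,…, where c ≥ 0 and d ≥ 1. Then A^d lies in L^{1,∞} (i.e. its ordered eigenvalue partial sums are O(log N)), while A^{d-1} does not lie in L^{1,∞} when d ≥ 2. -/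
open Filter Finset Asymptotics

private lemma choose_upper (d m : ℕ) (hd : 1 ≤ d) :
    ((d + m - 1).choose (d - 1) : ℝ) ≤ ((d : ℝ) * ((m : ℝ) + 1)) ^ (d - 1) := by
  have h1 : (d + m - 1).choose (d - 1) ≤ (d + m - 1) ^ (d - 1) :=
    le_trans (Nat.le_mul_of_pos_left _ (Nat.factorial_pos _))
      (by rw [← Nat.descFactorial_eq_factorial_mul_choose]; exact Nat.descFactorial_le_pow _ _)
  have h2 : (d + m - 1) ^ (d - 1) ≤ (d * (m + 1)) ^ (d - 1) := by
    apply Nat.pow_le_pow_left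
    have : d + m - 1 ≤ d + m := Nat.sub_le _ _
    calc d + m - 1 ≤ d + m := Nat.sub_le _ _
      _ ≤ d * (m + 1) := by nlinarith
  calc ((d + m - 1).choose (d - 1) : ℝ) ≤ ((d * (m + 1)) ^ (d - 1) : ℕ) := by
        exact_mod_cast h1.trans h2
    _ = ((d : ℝ) * ((m : ℝ) + 1)) ^ (d - 1) := by push_cast; ring

private lemma choose_lower (d m : ℕ) (hd : 1 ≤ d) :
    (((m : ℝ) + 1) ^ (d - 1)) / ((Nat.factorial (d - 1)) : ℝ) ≤ ((d + m - 1).choose (d - 1) : ℝ) := by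
  have h1 : (m + 1) ^ (d - 1) ≤ (Nat.factorial (d - 1)) * (d + m - 1).choose (d - 1) := by
    rw [← Nat.descFactorial_eq_factorial_mul_choose]
    have := Nat.pow_sub_le_descFactorial (d + m - 1) (d - 1)
    have he : d + m - 1 + 1 - (d - 1) = m + 1 := by omega
    rwa [he] at this
  rw [div_le_iff₀ (by positivity)]
  calc (((m : ℝ) + 1) ^ (d - 1)) = (((m + 1) ^ (d - 1) : ℕ) : ℝ) := by push_cast; ring
    _ ≤ (((Nat.factorial (d - 1)) * (d + m - 1).choose (d - 1) : ℕ) : ℝ) := by exact_mod_cast h1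
    _ = ((d + m - 1).choose (d - 1) : ℝ) * ((Nat.factorial (d - 1)) : ℝ) := by push_cast; ring

/-- For the diagonal operator with eigenvalues `λ_m = (c+π(m+d/2))⁻¹` of multiplicity
`C(d+m-1,d-1)`, the `d`-th power is in the Macaev ideal `L^{1,∞}` (partial sums of the
eigenvalues, with multiplicity, are `O(log N)`), while the `(d-1)`-st power is not when
`d ≥ 2`. -/
theorem diagonal_power_macaev (d : ℕ) (hd : 1 ≤ d) (c : ℝ) (hc : 0 ≤ c) :
    ((fun N : ℕ => ∑ m ∈ Finset.range (N + 1),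
        ((d + m - 1).choose (d - 1) : ℝ) * ((c + Real.pi * (m + (d : ℝ) / 2))⁻¹) ^ d)
      =O[atTop] fun N : ℕ => Real.log N) ∧
    (2 ≤ d → ¬ ((fun N : ℕ => ∑ m ∈ Finset.range (N + 1),
        ((d + m - 1).choose (d - 1) : ℝ) * ((c + Real.pi * (m + (d : ℝ) / 2))⁻¹) ^ (d - 1))
      =O[atTop] fun N : ℕ => Real.log N)) := by
  have hπ := Real.pi_pos
  have hd1 : (1 : ℝ) ≤ (d : ℝ) := by exact_mod_cast hd
  have hbase : ∀ m : ℕ, 0 < c + Real.pi * ((m : ℝ) + (d : ℝ) / 2) := by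
    intro m
    have hm : (0 : ℝ) ≤ (m : ℝ) := Nat.cast_nonneg m
    nlinarith
  constructor
  · -- Part 1: A^d ∈ L^{1,∞}
    set K : ℝ := (d : ℝ) ^ (d - 1) * (2 / Real.pi) ^ d with hK
    have hKpos : 0 < K := by positivity
    have hterm : ∀ m : ℕ, ((d + m - 1).choose (d - 1) : ℝ) *
        ((c + Real.pi * (m + (d : ℝ) / 2))⁻¹) ^ d ≤ K * ((m : ℝ) + 1)⁻¹ := by
      intro m
      have hm : (0 : ℝ) ≤ (m : ℝ) := Nat.cast_nonneg m
      have ht : (0 : ℝ) < (m : ℝ) + 1 := by linarith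
      have hx := hbase m
      have hlb : Real.pi * ((m : ℝ) + 1) / 2 ≤ c + Real.pi * ((m : ℝ) + (d : ℝ) / 2) := by
        nlinarith
      have hinv : (c + Real.pi * ((m : ℝ) + (d : ℝ) / 2))⁻¹ ≤ 2 / (Real.pi * ((m : ℝ) + 1)) := by
        rw [inv_le_iff_one_le_mul₀ hx]
        rw [div_mul_eq_mul_div, le_div_iff₀ (by positivity), one_mul]
        calc Real.pi * ((m : ℝ) + 1) = 2 * (Real.pi * ((m : ℝ) + 1) / 2) := by ring
          _ ≤ 2 * (c + Real.pi * ((m : ℝ) + (d : ℝ) / 2)) := by linarith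
      have hpow : ((c + Real.pi * (m + (d : ℝ) / 2))⁻¹) ^ d ≤
          (2 / (Real.pi * ((m : ℝ) + 1))) ^ d :=
        pow_le_pow_left₀ (by positivity) hinv d
      have h1 := choose_upper d m hd
      calc ((d + m - 1).choose (d - 1) : ℝ) * ((c + Real.pi * (m + (d : ℝ) / 2))⁻¹) ^ d
          ≤ ((d : ℝ) * ((m : ℝ) + 1)) ^ (d - 1) * (2 / (Real.pi * ((m : ℝ) + 1))) ^ d := by
            apply mul_le_mul h1 hpow (by positivity) (by positivity)
        _ = K * ((m : ℝ) + 1)⁻¹ := by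
            have hdd : d = (d - 1) + 1 := (Nat.succ_pred_eq_of_pos hd).symm
            have htp : ((m : ℝ) + 1) ^ d = ((m : ℝ) + 1) ^ (d - 1) * ((m : ℝ) + 1) := by
              conv_lhs => rw [hdd]
              rw [pow_succ]
            rw [hK, mul_pow, div_pow, div_pow, mul_pow, htp]
            field_simp
    apply IsBigO.of_bound (3 * K)
    filter_upwards [eventually_ge_atTop 3] with N hN
    have hN3 : (3 : ℝ) ≤ (N : ℝ) := by exact_mod_cast hN
    have hN1 : (1 : ℝ) ≤ (N : ℝ) := by linarith
    have hlogN : (1 : ℝ) ≤ Real.log N := by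
      rw [Real.le_log_iff_exp_le (by linarith)]
      calc Real.exp 1 ≤ 2.7182818286 := Real.exp_one_lt_d9.le
        _ ≤ 3 := by norm_num
        _ ≤ (N : ℝ) := hN3
    have hsum_nonneg : 0 ≤ ∑ m ∈ Finset.range (N + 1),
        ((d + m - 1).choose (d - 1) : ℝ) * ((c + Real.pi * (m + (d : ℝ) / 2))⁻¹) ^ d := by
      apply Finset.sum_nonneg
      intro m _
      have := hbase m
      positivity
    rw [Real.norm_eq_abs, Real.norm_eq_abs, abs_of_nonneg hsum_nonneg,
      abs_of_nonneg (by linarith : (0:ℝ) ≤ Real.log N)]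
    have step1 : ∑ m ∈ Finset.range (N + 1),
        ((d + m - 1).choose (d - 1) : ℝ) * ((c + Real.pi * (m + (d : ℝ) / 2))⁻¹) ^ d
        ≤ K * (harmonic (N + 1) : ℝ) := by
      have : (harmonic (N + 1) : ℝ) = ∑ m ∈ Finset.range (N + 1), ((m : ℝ) + 1)⁻¹ := by
        rw [harmonic]; push_cast; ring
      rw [this, Finset.mul_sum]
      exact Finset.sum_le_sum fun m _ => hterm m
    have step2 : (harmonic (N + 1) : ℝ) ≤ 1 + Real.log (N + 1) := by
      have := harmonic_le_one_add_log (N + 1)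
      push_cast at this ⊢
      linarith
    have step3 : Real.log ((N : ℝ) + 1) ≤ Real.log 2 + Real.log N := by
      rw [← Real.log_mul (by norm_num) (by linarith)]
      apply Real.log_le_log (by linarith)
      linarith
    have hlog2 : Real.log 2 ≤ Real.log N := Real.log_le_log (by norm_num) (by linarith)
    calc ∑ m ∈ Finset.range (N + 1),
        ((d + m - 1).choose (d - 1) : ℝ) * ((c + Real.pi * (m + (d : ℝ) / 2))⁻¹) ^ d
        ≤ K * (1 + Real.log (N + 1)) := step1.trans (mul_le_mul_of_nonneg_left step2 hKpos.le)
      _ ≤ K * (3 * Real.log N) := by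
          apply mul_le_mul_of_nonneg_left _ hKpos.le
          push_cast
          linarith
      _ = 3 * K * Real.log N := by ring
  · -- Part 2: A^(d-1) ∉ L^{1,∞}
    intro hd2 hO
    set K' : ℝ := ((Nat.factorial (d - 1)) : ℝ)⁻¹ * ((c + Real.pi * d)⁻¹) ^ (d - 1) with hK'
    have hA : (0 : ℝ) < c + Real.pi * d := by nlinarith
    have hK'pos : 0 < K' := by positivity
    have hlow : ∀ N : ℕ, K' * ((N : ℝ) + 1) ≤ ∑ m ∈ Finset.range (N + 1),
        ((d + m - 1).choose (d - 1) : ℝ) * ((c + Real.pi * (m + (d : ℝ) / 2))⁻¹) ^ (d - 1) := by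
      intro N
      have hterm : ∀ m : ℕ, K' ≤ ((d + m - 1).choose (d - 1) : ℝ) *
          ((c + Real.pi * (m + (d : ℝ) / 2))⁻¹) ^ (d - 1) := by
        intro m
        have hm : (0 : ℝ) ≤ (m : ℝ) := Nat.cast_nonneg m
        have ht : (0 : ℝ) < (m : ℝ) + 1 := by linarith
        have hx := hbase m
        have hub : c + Real.pi * ((m : ℝ) + (d : ℝ) / 2) ≤ (c + Real.pi * d) * ((m : ℝ) + 1) := by
          nlinarith [mul_nonneg (mul_nonneg hπ.le (sub_nonneg.2 hd1)) hm, mul_nonneg hc hm]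
        have hinv : ((c + Real.pi * d) * ((m : ℝ) + 1))⁻¹ ≤
            (c + Real.pi * ((m : ℝ) + (d : ℝ) / 2))⁻¹ :=
          inv_anti₀ hx hub
        have hpow : (((c + Real.pi * d) * ((m : ℝ) + 1))⁻¹) ^ (d - 1) ≤
            ((c + Real.pi * (m + (d : ℝ) / 2))⁻¹) ^ (d - 1) :=
          pow_le_pow_left₀ (by positivity) hinv _
        calc K' = (((m : ℝ) + 1) ^ (d - 1)) / ((Nat.factorial (d - 1)) : ℝ) *
              (((c + Real.pi * d) * ((m : ℝ) + 1))⁻¹) ^ (d - 1) := by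
              rw [hK', mul_inv, mul_pow]
              field_simp
              rw [← mul_pow, mul_one_div_cancel (by positivity), one_pow]
          _ ≤ ((d + m - 1).choose (d - 1) : ℝ) *
              ((c + Real.pi * (m + (d : ℝ) / 2))⁻¹) ^ (d - 1) := by
              apply mul_le_mul (choose_lower d m hd) hpow (by positivity) (by positivity)
      calc K' * ((N : ℝ) + 1) = ∑ _m ∈ Finset.range (N + 1), K' := by
            rw [Finset.sum_const, Finset.card_range]; push_cast; ring
        _ ≤ _ := Finset.sum_le_sum fun m _ => hterm m
    have hlog : (fun N : ℕ => Real.log N) =o[atTop] (fun N : ℕ => (N : ℝ)) :=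
      Real.isLittleO_log_id_atTop.comp_tendsto tendsto_natCast_atTop_atTop
    have hlo : (fun N : ℕ => ∑ m ∈ Finset.range (N + 1),
        ((d + m - 1).choose (d - 1) : ℝ) * ((c + Real.pi * (m + (d : ℝ) / 2))⁻¹) ^ (d - 1))
        =o[atTop] (fun N : ℕ => (N : ℝ)) := hO.trans_isLittleO hlog
    have hev := hlo.def (half_pos hK'pos)
    obtain ⟨N, hN⟩ := hev.exists
    have hf := hlow N
    have hNnn : (0 : ℝ) ≤ (N : ℝ) := Nat.cast_nonneg N
    have hfnn : 0 ≤ ∑ m ∈ Finset.range (N + 1),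
        ((d + m - 1).choose (d - 1) : ℝ) * ((c + Real.pi * (m + (d : ℝ) / 2))⁻¹) ^ (d - 1) := by
      nlinarith
    rw [Real.norm_eq_abs, Real.norm_eq_abs, abs_of_nonneg hfnn, abs_of_nonneg hNnn] at hN
    nlinarith
end

section
/- The symplectic Fourier transform F̂(w') = 2^{-d} ∫_{ℂ^d} F(w) e^{π i Im(w'·w̄)} dm(w) and symplectic convolution (F∗G)(w) = ∫_{ℂ^d} F(z) G(w-z) e^{π i Im(w·z̄)} dm(z) satisfy, for Schwartz functions F and G on ℂ^d, the identity (F ∗ G)^ = F ∗ Ĝ. -/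
open MeasureTheory Complex

/-- The symplectic Fourier transform
`F̂(w') = 2^{-d} ∫ F(w) e^{π i Im(w'·w̄)} dm(w)`. -/
noncomputable def sympFourier (d : ℕ) (F : (Fin d → ℂ) → ℂ) (w' : Fin d → ℂ) : ℂ :=
  (2 : ℂ) ^ (-(d : ℤ)) *
    ∫ w : Fin d → ℂ,
      F w * Complex.exp ((Real.pi : ℂ) * Complex.I *
        ((∑ j, w' j * (starRingEnd ℂ) (w j)).im : ℝ)) ∂volume

/-- The symplectic convolution
`(F∗G)(w) = ∫ F(z) G(w−z) e^{π i Im(w·z̄)} dm(z)`. -/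
noncomputable def sympConv (d : ℕ) (F G : (Fin d → ℂ) → ℂ) (w : Fin d → ℂ) : ℂ :=
  ∫ z : Fin d → ℂ,
    F z * G (w - z) * Complex.exp ((Real.pi : ℂ) * Complex.I *
      ((∑ j, w j * (starRingEnd ℂ) (z j)).im : ℝ)) ∂volume

noncomputable def ph (d : ℕ) (a b : Fin d → ℂ) : ℂ :=
  Complex.exp ((Real.pi : ℂ) * Complex.I * ((∑ j, a j * (starRingEnd ℂ) (b j)).im : ℝ))

lemma norm_ph (d : ℕ) (a b : Fin d → ℂ) : ‖ph d a b‖ = 1 := by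
  rw [ph, Complex.norm_exp]
  have : ((Real.pi : ℂ) * Complex.I * ((∑ j, a j * (starRingEnd ℂ) (b j)).im : ℝ)).re = 0 := by
    simp [Complex.mul_re, Complex.mul_im]
  rw [this, Real.exp_zero]

lemma continuous_ph2 {X : Type*} [TopologicalSpace X] (d : ℕ) {f g : X → (Fin d → ℂ)}
    (hf : Continuous f) (hg : Continuous g) : Continuous fun x => ph d (f x) (g x) := by
  unfold ph
  refine Complex.continuous_exp.comp (continuous_const.mul ?_)
  refine Complex.continuous_ofReal.comp (Complex.continuous_im.comp ?_)
  refine continuous_finset_sum _ fun j _ => ?_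
  exact ((continuous_apply j).comp hf).mul
    (continuous_star.comp ((continuous_apply j).comp hg))

lemma ph_key (d : ℕ) (u z w' : Fin d → ℂ) :
    ph d (u + z) z * ph d w' (u + z) = ph d (w' - z) u * ph d w' z := by
  unfold ph
  rw [← Complex.exp_add, ← Complex.exp_add]
  have h : ((∑ j, (u + z) j * (starRingEnd ℂ) (z j)).im)
        + ((∑ j, w' j * (starRingEnd ℂ) ((u + z) j)).im)
      = ((∑ j, (w' - z) j * (starRingEnd ℂ) (u j)).im)
        + ((∑ j, w' j * (starRingEnd ℂ) (z j)).im) := by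
    simp only [Pi.add_apply, Pi.sub_apply, Complex.im_sum, ← Finset.sum_add_distrib]
    refine Finset.sum_congr rfl fun j _ => ?_
    simp only [map_add, map_sub, add_mul, sub_mul, mul_add, Complex.add_im, Complex.sub_im,
      Complex.mul_im, Complex.conj_re, Complex.conj_im]
    ring
  have h' : ((((∑ j, (u + z) j * (starRingEnd ℂ) (z j)).im : ℝ)) : ℂ)
        + (((∑ j, w' j * (starRingEnd ℂ) ((u + z) j)).im : ℝ) : ℂ)
      = (((∑ j, (w' - z) j * (starRingEnd ℂ) (u j)).im : ℝ) : ℂ)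
        + (((∑ j, w' j * (starRingEnd ℂ) (z j)).im : ℝ) : ℂ) := by
    exact_mod_cast congrArg (fun r : ℝ => (r : ℂ)) h
  congr 1
  linear_combination (Real.pi : ℂ) * Complex.I * h'

set_option maxHeartbeats 1000000

/-- For Schwartz functions `F, G` on `ℂ^d`, `(F ∗ G)^ = F ∗ Ĝ`. -/
theorem sympFourier_sympConv (d : ℕ)
    (F G : SchwartzMap (Fin d → ℂ) ℂ) :
    sympFourier d (sympConv d (⇑F) (⇑G)) = sympConv d (⇑F) (sympFourier d (⇑G)) := by
  funext w'
  have hF : Integrable (⇑F) (volume : Measure (Fin d → ℂ)) := F.integrable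
  have hG : Integrable (⇑G) (volume : Measure (Fin d → ℂ)) := G.integrable
  have hbase : Integrable (fun q : (Fin d → ℂ) × (Fin d → ℂ) => G q.1 * F q.2)
      ((volume : Measure (Fin d → ℂ)).prod volume) := hG.mul_prod hF
  have hT : MeasurePreserving (fun p : (Fin d → ℂ) × (Fin d → ℂ) => (p.1 - p.2, p.2))
      ((volume : Measure (Fin d → ℂ)).prod volume)
      ((volume : Measure (Fin d → ℂ)).prod volume) :=
    measurePreserving_sub_prod _ _
  have hcomp : Integrable (fun p : (Fin d → ℂ) × (Fin d → ℂ) => G (p.1 - p.2) * F p.2)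
      ((volume : Measure (Fin d → ℂ)).prod volume) := by
    have := (hT.integrable_comp hbase.aestronglyMeasurable).2 hbase
    exact this
  have hKcont : Continuous (fun p : (Fin d → ℂ) × (Fin d → ℂ) =>
      F p.2 * G (p.1 - p.2) * ph d p.1 p.2 * ph d w' p.1) := by
    exact (((F.continuous.comp continuous_snd).mul
      (G.continuous.comp (continuous_fst.sub continuous_snd))).mul
      (continuous_ph2 d continuous_fst continuous_snd)).mul
      (continuous_ph2 d continuous_const continuous_fst)
  have hK : Integrable (Function.uncurry fun w z : Fin d → ℂ =>
      F z * G (w - z) * ph d w z * ph d w' w)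
      ((volume : Measure (Fin d → ℂ)).prod volume) := by
    refine hcomp.norm.mono' hKcont.aestronglyMeasurable ?_
    refine Filter.Eventually.of_forall fun p => ?_
    show ‖F p.2 * G (p.1 - p.2) * ph d p.1 p.2 * ph d w' p.1‖ ≤ ‖G (p.1 - p.2) * F p.2‖
    rw [norm_mul, norm_mul, norm_ph, norm_ph, mul_one, mul_one, norm_mul, norm_mul]
    exact le_of_eq (mul_comm _ _)
  calc sympFourier d (sympConv d (⇑F) (⇑G)) w'
      = (2:ℂ)^(-(d:ℤ)) * ∫ w : Fin d → ℂ,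
          (∫ z : Fin d → ℂ, F z * G (w - z) * ph d w z) * ph d w' w := rfl
    _ = (2:ℂ)^(-(d:ℤ)) * ∫ w : Fin d → ℂ,
          ∫ z : Fin d → ℂ, F z * G (w - z) * ph d w z * ph d w' w := by
        congr 1
        refine integral_congr_ae (Filter.Eventually.of_forall fun w => ?_)
        exact (integral_mul_const _ _).symm
    _ = (2:ℂ)^(-(d:ℤ)) * ∫ z : Fin d → ℂ,
          ∫ w : Fin d → ℂ, F z * G (w - z) * ph d w z * ph d w' w := by
        congr 1
        exact integral_integral_swap hK
    _ = (2:ℂ)^(-(d:ℤ)) * ∫ z : Fin d → ℂ,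
          (F z * ph d w' z) * ∫ u : Fin d → ℂ, G u * ph d (w' - z) u := by
        congr 1
        refine integral_congr_ae (Filter.Eventually.of_forall fun z => ?_)
        beta_reduce
        rw [← integral_add_right_eq_self
          (fun w => F z * G (w - z) * ph d w z * ph d w' w) z]
        rw [← integral_const_mul]
        refine integral_congr_ae (Filter.Eventually.of_forall fun u => ?_)
        show F z * G (u + z - z) * ph d (u + z) z * ph d w' (u + z)
          = F z * ph d w' z * (G u * ph d (w' - z) u)
        rw [add_sub_cancel_right]
        calc F z * G u * ph d (u + z) z * ph d w' (u + z)
            = F z * G u * (ph d (u + z) z * ph d w' (u + z)) := by ring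
          _ = F z * G u * (ph d (w' - z) u * ph d w' z) := by rw [ph_key]
          _ = F z * ph d w' z * (G u * ph d (w' - z) u) := by ring
    _ = ∫ z : Fin d → ℂ,
          F z * ((2:ℂ)^(-(d:ℤ)) * ∫ u : Fin d → ℂ, G u * ph d (w' - z) u) * ph d w' z := by
        rw [← integral_const_mul]
        refine integral_congr_ae (Filter.Eventually.of_forall fun z => ?_)
        beta_reduce
        ring
    _ = sympConv d (⇑F) (sympFourier d (⇑G)) w' := rfl
end
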